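/- Lower bound on the cumulative number of safe states (Theorem 1 of the paper, worst-case form): for all times t₀ ≤ t ≤ N, Σ_{i=t}^{N} |Ŝ_i| ≥ |Ŝ_t| + Σ_{i=t+1}^{N} M_i, where M_i := |Ŝ_t ∩ G_t^{i+1}(l, Ŝ_t)|. -/

import Mathlib

/-- Combined Lipschitz bound `L(s, s', τ, τ') = L_s·d_s(s,s') + L_t·|τ − τ'|·Δ`. -/
def Lfun {S : Type*} (ds : S → S → ℝ) (Ls Lt Δ : ℝ) (s s' : S) (τ τ' : ℕ) : ℝ :=
  Ls * ds s s' + Lt * |(τ : ℝ) - (τ' : ℝ)| * Δ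

/-- One-step safe set `S_t(l, X)` (for `t ≥ 1`). -/
def oneStepSafe {S : Type*} (ds : S → S → ℝ) (Ls Lt Δ h : ℝ) (l : ℕ → S → ℝ)
    (X : Set S) (t : ℕ) : Set S :=
  {s | ∃ s' ∈ X, l (t - 1) s' - Lfun ds Ls Lt Δ s s' t (t - 1) ≥ h}

/-- Conservative safe set `G_{τ'}^{τ}(l, X)` (for `τ' < τ`). -/
def consSafe {S : Type*} (ds : S → S → ℝ) (Ls Lt Δ h : ℝ) (l : ℕ → S → ℝ)
    (X : Set S) (τ' τ : ℕ) : Set S :=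
  {s | ∃ s' ∈ X, l τ' s' - Lfun ds Ls Lt Δ s s' τ τ' ≥ h}
/-- One-step reachable set: `X` together with the states reachable from `X` in one step. -/
def Rreach {S A : Type*} (f : S → A → S) (X : Set S) : Set S :=
  X ∪ {s | ∃ s' ∈ X, ∃ a : A, s = f s' a}

/-- One-step returnable set: `X` together with the states from which `X` can be
reached in one step. -/
def Rret {S A : Type*} (f : S → A → S) (X : Set S) : Set S :=
  X ∪ {s | ∃ a : A, f s a ∈ X}

/-- The recursively defined safe sets: `hatS … i = Ŝ_i`, with `Ŝ_{t₀} = X₀` and, for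
`i > t₀`, `Ŝ_i = S_i(l, Ŝ_{i−1}) ∩ R_reach(Ŝ_{i−1}) ∩ R_ret(G_{i−1}^{i+1}(l, Ŝ_{i−1}))`. -/
def hatS {S A : Type*} (f : S → A → S) (ds : S → S → ℝ) (Ls Lt Δ h : ℝ)
    (l : ℕ → S → ℝ) (t₀ : ℕ) (X₀ : Set S) : ℕ → Set S := fun i =>
  Nat.rec X₀
    (fun n prev =>
      oneStepSafe ds Ls Lt Δ h l prev (t₀ + n + 1) ∩ Rreach f prev ∩
        Rret f (consSafe ds Ls Lt Δ h l prev (t₀ + n) (t₀ + n + 2)))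
    (i - t₀)

lemma hatS_succ {S A : Type*} (f : S → A → S) (ds : S → S → ℝ) (Ls Lt Δ h : ℝ)
    (l : ℕ → S → ℝ) (t₀ : ℕ) (X₀ : Set S) (i : ℕ) (hi : t₀ ≤ i) :
    hatS f ds Ls Lt Δ h l t₀ X₀ (i + 1) =
      oneStepSafe ds Ls Lt Δ h l (hatS f ds Ls Lt Δ h l t₀ X₀ i) (i + 1) ∩
        Rreach f (hatS f ds Ls Lt Δ h l t₀ X₀ i) ∩
        Rret f (consSafe ds Ls Lt Δ h l (hatS f ds Ls Lt Δ h l t₀ X₀ i) i (i + 2)) := by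
  have h1 : i + 1 - t₀ = (i - t₀) + 1 := by omega
  have h2 : t₀ + (i - t₀) = i := by omega
  simp only [hatS, h1, h2]

theorem cumulative_safe_states_lower_bound {S A : Type*} [Fintype S] [Fintype A]
    (f : S → A → S)
    (ds : S → S → ℝ) (hds_nonneg : ∀ s s' : S, 0 ≤ ds s s')
    (hds_refl : ∀ s : S, ds s s = 0)
    (Ls Lt Δ : ℝ) (hLs : 0 ≤ Ls) (hLt : 0 ≤ Lt) (hΔ : 0 ≤ Δ) (h : ℝ)
    (l : ℕ → S → ℝ)
    (hl_temp : ∀ (τ τ' : ℕ) (s : S), l τ s ≥ l τ' s - Lt * |(τ : ℝ) - (τ' : ℝ)| * Δ)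
    (t₀ : ℕ) (ht₀ : 1 ≤ t₀) (X₀ : Set S)
    (t N : ℕ) (ht : t₀ ≤ t) (htN : t ≤ N) :
    (hatS f ds Ls Lt Δ h l t₀ X₀ t).ncard +
        ∑ i ∈ Finset.Icc (t + 1) N,
          (hatS f ds Ls Lt Δ h l t₀ X₀ t ∩
            consSafe ds Ls Lt Δ h l (hatS f ds Ls Lt Δ h l t₀ X₀ t) t (i + 1)).ncard ≤
      ∑ i ∈ Finset.Icc t N, (hatS f ds Ls Lt Δ h l t₀ X₀ i).ncard := by
  set hs := hatS f ds Ls Lt Δ h l t₀ X₀ with hhs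
  -- key subset lemma
  have key : ∀ i, t ≤ i →
      hs t ∩ consSafe ds Ls Lt Δ h l (hs t) t (i + 1) ⊆ hs i := by
    intro i hi
    induction i, hi using Nat.le_induction with
    | base => exact Set.inter_subset_left
    | succ i hi IH =>
      intro s hsmem
      obtain ⟨hst, s'', hs''t, hineq⟩ := hsmem
      -- cast facts
      have hc2 : |((i + 1 + 1 : ℕ) : ℝ) - (t : ℝ)| = (i : ℝ) + 2 - t := by
        rw [abs_of_nonneg]
        · push_cast; ring
        · push_cast
          have : (t : ℝ) ≤ i := by exact_mod_cast hi
          linarith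
      have hc1 : |((i + 1 : ℕ) : ℝ) - (t : ℝ)| = (i : ℝ) + 1 - t := by
        rw [abs_of_nonneg]
        · push_cast; ring
        · push_cast
          have : (t : ℝ) ≤ i := by exact_mod_cast hi
          linarith
      have hc0 : |((i : ℕ) : ℝ) - (t : ℝ)| = (i : ℝ) - t := by
        rw [abs_of_nonneg]
        have : (t : ℝ) ≤ i := by exact_mod_cast hi
        linarith
      have hti : (t : ℝ) ≤ i := by exact_mod_cast hi
      rw [Lfun, hc2] at hineq
      -- l t s'' ≥ h + Ls * ds s s'' + Lt * (i+2-t) * Δ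
      have hnn := hds_nonneg s s''
      -- s'' is in hs i
      have hs''i : s'' ∈ hs i := by
        apply IH
        refine ⟨hs''t, s'', hs''t, ?_⟩
        rw [Lfun, hc1, hds_refl]
        nlinarith
      -- s is in hs i
      have hsi : s ∈ hs i := by
        apply IH
        refine ⟨hst, s'', hs''t, ?_⟩
        rw [Lfun, hc1]
        nlinarith
      -- temporal consistency from t to i
      have htemp : l i s'' ≥ l t s'' - Lt * ((i : ℝ) - t) * Δ := by
        have := hl_temp i t s''
        rwa [hc0] at this
      rw [hhs, hatS_succ f ds Ls Lt Δ h l t₀ X₀ i (ht.trans hi), ← hhs]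
      refine ⟨⟨⟨s'', hs''i, ?_⟩, Or.inl hsi⟩, Or.inl ⟨s'', hs''i, ?_⟩⟩
      · -- oneStepSafe at i+1 : l ((i+1)-1) s'' - Lfun s s'' (i+1) i ≥ h
        have hsub : i + 1 - 1 = i := by omega
        rw [hsub, Lfun]
        have habs : |((i + 1 : ℕ) : ℝ) - ((i : ℕ) : ℝ)| = 1 := by
          rw [abs_of_nonneg] <;> push_cast <;> linarith
        rw [habs]
        nlinarith
      · -- consSafe (hs i) i (i+2) : l i s'' - Lfun s s'' (i+2) i ≥ h
        rw [Lfun]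
        have habs : |((i + 2 : ℕ) : ℝ) - ((i : ℕ) : ℝ)| = 2 := by
          rw [abs_of_nonneg] <;> push_cast <;> linarith
        rw [habs]
        nlinarith
  -- split the sum
  rw [Finset.Icc_eq_cons_Ioc htN, Finset.sum_cons, ← Finset.Icc_add_one_left_eq_Ioc]
  refine add_le_add (le_refl _) (Finset.sum_le_sum ?_)
  intro i hi
  rw [Finset.mem_Icc] at hi
  exact Set.ncard_le_ncard (key i (by omega)) (Set.toFinite _)
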